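/- Let x, y ∈ ℝ³ with x ≠ y, let L > 0, and let M₁, M₂ be real 3×3 matrices such that M₁ + M₂ is invertible. Set C = ‖y − x‖ − L, u = (y − x)/‖y − x‖, Δx = M₂ (M₁ + M₂)⁻¹ (C u) and Δy = − M₁ (M₁ + M₂)⁻¹ (C u). Then the corrected edge (y + Δy) − (x + Δx) is nonzero, and the orientation change Ω_Δ = ( (y − x)/‖y − x‖ ) × ( ((y + Δy) − (x + Δx)) / ‖(y + Δy) − (x + Δx)‖ ) equals the zero vector, where × is the cross product on ℝ³. -/

import Mathlib

/-- The cross product on `ℝ³ = EuclideanSpace ℝ (Fin 3)`. -/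
noncomputable def cross3 (a b : EuclideanSpace ℝ (Fin 3)) : EuclideanSpace ℝ (Fin 3) :=
  (WithLp.equiv 2 (Fin 3 → ℝ)).symm
    (crossProduct ((WithLp.equiv 2 (Fin 3 → ℝ)) a) ((WithLp.equiv 2 (Fin 3 → ℝ)) b))

/-- For vertices `x ≠ y` in ℝ³, undeformed length `L > 0`, and mass
matrices `M₁, M₂` with `M₁ + M₂` invertible, the DEFT inextensibility corrections
`Δx = M₂ (M₁+M₂)⁻¹ (C u)` and `Δy = −M₁ (M₁+M₂)⁻¹ (C u)` (with `C = ‖y − x‖ − L` and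
`u = (y − x)/‖y − x‖`) yield a nonzero corrected edge `(y + Δy) − (x + Δx)`, and the
orientation change `Ω_Δ = unit(y − x) × unit((y + Δy) − (x + Δx))` is the zero vector. -/
theorem inextensibility_correction_zero_orientation_change
    (x y : EuclideanSpace ℝ (Fin 3)) (hxy : x ≠ y) (L : ℝ) (hL : 0 < L)
    (M₁ M₂ : Matrix (Fin 3) (Fin 3) ℝ) (hM : IsUnit (M₁ + M₂)) :
    let C : ℝ := ‖y - x‖ - L
    let u : EuclideanSpace ℝ (Fin 3) := ‖y - x‖⁻¹ • (y - x)
    let Δx : EuclideanSpace ℝ (Fin 3) :=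
      Matrix.toEuclideanLin (M₂ * (M₁ + M₂)⁻¹) (C • u)
    let Δy : EuclideanSpace ℝ (Fin 3) :=
      -Matrix.toEuclideanLin (M₁ * (M₁ + M₂)⁻¹) (C • u)
    let e : EuclideanSpace ℝ (Fin 3) := (y + Δy) - (x + Δx)
    e ≠ 0 ∧ cross3 u (‖e‖⁻¹ • e) = 0 := by
  intro C u Δx Δy e
  have hn : (0:ℝ) < ‖y - x‖ := by
    rw [norm_pos_iff, sub_ne_zero]; exact fun h => hxy h.symm
  have hinv : (M₁ + M₂) * (M₁ + M₂)⁻¹ = 1 :=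
    Matrix.mul_nonsing_inv _ ((Matrix.isUnit_iff_isUnit_det _).mp hM)
  have hsum : Δy - Δx = -(C • u) := by
    have : Δy - Δx = -(Matrix.toEuclideanLin (M₁ * (M₁ + M₂)⁻¹ + M₂ * (M₁ + M₂)⁻¹)) (C • u) := by
      simp [Δy, Δx, map_add]
      abel
    rw [this, ← add_mul, hinv]
    simp only [Matrix.toEuclideanLin_apply, Matrix.one_mulVec, neg_inj]
  have he : e = (L * ‖y - x‖⁻¹) • (y - x) := by
    have : e = (y - x) + (Δy - Δx) := by simp [e]; abel
    rw [this, hsum]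
    simp only [C, u, smul_smul]
    nth_rewrite 1 [← one_smul ℝ (y - x)]
    rw [← neg_smul, ← add_smul]
    congr 1
    field_simp
    ring
  have hk : L * ‖y - x‖⁻¹ ≠ 0 := by positivity
  constructor
  · rw [he]
    exact smul_ne_zero hk (sub_ne_zero.mpr (fun h => hxy h.symm))
  · rw [he]
    simp only [cross3, u, smul_smul]
    rw [WithLp.equiv_apply, WithLp.ofLp_smul, WithLp.equiv_apply, WithLp.ofLp_smul, LinearMap.map_smul, LinearMap.map_smul₂,
      cross_self]
    simp
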